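/- Let a, b be real numbers and let μ_ℓ be the measure on ℝ³ given by the density e^{(b−a)z} with respect to Lebesgue measure, i.e. μ_ℓ = volume.withDensity((x,y,z) ↦ exp((b−a)·z)). Then μ_ℓ is left-invariant: for every g = (α,β,γ) ∈ ℝ³, the pushforward of μ_ℓ under the left translation L_g(x,y,z) = (α + e^{aγ}·x, β + e^{−bγ}·y, γ + z) equals μ_ℓ. -/

import Mathlib

open MeasureTheory
open scoped NNReal ENNReal

-- smul on both factors of a product measure
lemma smul_prod_smul' {α β : Type*} [MeasurableSpace α] [MeasurableSpace β]
    (c d : ℝ≥0) (μ : Measure α) (ν : Measure β) [SigmaFinite μ] [SigmaFinite ν] :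
    ((c : ℝ≥0∞) • μ).prod ((d : ℝ≥0∞) • ν) = ((c : ℝ≥0∞) * d) • μ.prod ν := by
  haveI : SigmaFinite ((c : ℝ≥0∞) • μ) := by rw [← ENNReal.smul_def]; infer_instance
  haveI : SigmaFinite ((d : ℝ≥0∞) • ν) := by rw [← ENNReal.smul_def]; infer_instance
  refine Measure.prod_eq fun s t hs ht => ?_
  simp [Measure.prod_prod, mul_mul_mul_comm]

lemma smul_prod_left' {α β : Type*} [MeasurableSpace α] [MeasurableSpace β]
    (c : ℝ≥0) (μ : Measure α) (ν : Measure β) [SigmaFinite μ] [SigmaFinite ν] :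
    ((c : ℝ≥0∞) • μ).prod ν = (c : ℝ≥0∞) • μ.prod ν := by
  simpa using smul_prod_smul' c 1 μ ν

lemma map_withDensity_comp {α β : Type*} [MeasurableSpace α] [MeasurableSpace β]
    {f : α → β} (hf : Measurable f) {d : β → ℝ≥0∞} (hd : Measurable d) (μ : Measure α) :
    Measure.map f (μ.withDensity (d ∘ f)) = (Measure.map f μ).withDensity d := by
  ext s hs
  rw [Measure.map_apply hf hs, withDensity_apply _ (hf hs), withDensity_apply _ hs,
    setLIntegral_map hs hd hf]
  rfl

lemma map_affine_volume (c r : ℝ) (hr : 0 < r) :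
    Measure.map (fun x : ℝ => c + r * x) volume
      = ((r⁻¹.toNNReal : ℝ≥0∞)) • (volume : Measure ℝ) := by
  have h1 : (fun x : ℝ => c + r * x) = (fun x => c + x) ∘ (fun x => r * x) := rfl
  rw [h1, ← Measure.map_map (measurable_const_add c) (measurable_const_mul r),
    Real.map_volume_mul_left hr.ne', Measure.map_smul,
    MeasureTheory.map_add_left_eq_self volume c]
  congr 1
  rw [ENNReal.ofReal, abs_of_pos (inv_pos.2 hr)]

/-- The measure `μ_ℓ = e^{(b−a)z} dx dy dz` on `ℝ³` is invariant under every left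
translation `L_g(x,y,z) = (α + e^{aγ}x, β + e^{−bγ}y, γ + z)` of `Sol(a,b)`:
it is the left Haar measure. -/
theorem left_haar_measure_invariant (a b : ℝ) :
    ∀ g : ℝ × ℝ × ℝ,
      Measure.map
        (fun p : ℝ × ℝ × ℝ =>
          ((g.1 + Real.exp (a * g.2.2) * p.1,
            g.2.1 + Real.exp (-b * g.2.2) * p.2.1,
            g.2.2 + p.2.2) : ℝ × ℝ × ℝ))
        (volume.withDensity fun p : ℝ × ℝ × ℝ =>
          ENNReal.ofReal (Real.exp ((b - a) * p.2.2))) =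
      volume.withDensity fun p : ℝ × ℝ × ℝ =>
        ENNReal.ofReal (Real.exp ((b - a) * p.2.2)) := by
  intro g
  obtain ⟨α₀, β₀, γ⟩ := g
  simp only
  set r1 : ℝ := Real.exp (a * γ) with hr1
  set r2 : ℝ := Real.exp (-b * γ) with hr2
  set ψ : ℝ × ℝ × ℝ → ℝ × ℝ × ℝ :=
    fun p => (α₀ + r1 * p.1, β₀ + r2 * p.2.1, γ + p.2.2) with hψdef
  have hψ : Measurable ψ :=
    ((measurable_const_mul r1).const_add α₀).comp measurable_fst |>.prod
      (((measurable_const_mul r2).const_add β₀).comp (measurable_fst.comp measurable_snd) |>.prod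
        (measurable_const_add γ |>.comp (measurable_snd.comp measurable_snd)))
  set c1 : ℝ≥0∞ := ((r1⁻¹.toNNReal : ℝ≥0) : ℝ≥0∞) with hc1
  set c2 : ℝ≥0∞ := ((r2⁻¹.toNNReal : ℝ≥0) : ℝ≥0∞) with hc2
  -- pushforward of volume
  have hψvol : Measure.map ψ volume = (c1 * c2) • (volume : Measure (ℝ × ℝ × ℝ)) := by
    have hsplit : ψ = Prod.map (fun x : ℝ => α₀ + r1 * x)
        (Prod.map (fun y : ℝ => β₀ + r2 * y) (fun z : ℝ => γ + z)) := rfl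
    rw [hsplit, Measure.volume_eq_prod, Measure.volume_eq_prod,
      ← Measure.map_prod_map _ _ ((measurable_const_mul r1).const_add α₀)
        (((measurable_const_mul r2).const_add β₀).prodMap (measurable_const_add γ)),
      ← Measure.map_prod_map _ _ ((measurable_const_mul r2).const_add β₀)
        (measurable_const_add γ),
      map_affine_volume _ _ (Real.exp_pos _), map_affine_volume _ _ (Real.exp_pos _),
      MeasureTheory.map_add_left_eq_self volume γ,
      smul_prod_left' _ volume volume, smul_prod_smul',
      ← Measure.volume_eq_prod, ← Measure.volume_eq_prod]
  -- densities
  set D : ℝ × ℝ × ℝ → ℝ≥0∞ := fun p => ENNReal.ofReal (Real.exp ((b - a) * p.2.2)) with hD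
  set D' : ℝ × ℝ × ℝ → ℝ≥0∞ :=
    fun p => ENNReal.ofReal (Real.exp ((b - a) * (p.2.2 - γ))) with hD'
  have hDmeas' : Measurable D' := by fun_prop
  have hDcomp : D = D' ∘ ψ := by
    funext p
    simp only [hD, hD', Function.comp, hψdef]
    congr 2
    ring
  have hDmeas : Measurable D := by fun_prop
  have key : D' = (ENNReal.ofReal (Real.exp (-(b - a) * γ))) • D := by
    funext p
    simp only [hD, hD', Pi.smul_apply, smul_eq_mul,
      ← ENNReal.ofReal_mul (Real.exp_nonneg _), ← Real.exp_add]
    congr 2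
    ring
  calc Measure.map ψ (volume.withDensity D)
      = Measure.map ψ (volume.withDensity (D' ∘ ψ)) := by rw [← hDcomp]
    _ = (Measure.map ψ volume).withDensity D' := map_withDensity_comp hψ hDmeas' _
    _ = ((c1 * c2) • (volume : Measure (ℝ × ℝ × ℝ))).withDensity D' := by rw [hψvol]
    _ = (c1 * c2) • (volume.withDensity D') := withDensity_smul_measure _ _
    _ = (c1 * c2) • (ENNReal.ofReal (Real.exp (-(b - a) * γ)) • volume.withDensity D) := by
        rw [key, withDensity_smul _ hDmeas]
    _ = volume.withDensity D := by
        rw [smul_smul, hc1, hc2]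
        have h1 : ((r1⁻¹.toNNReal : ℝ≥0) : ℝ≥0∞) = ENNReal.ofReal r1⁻¹ := rfl
        have h2 : ((r2⁻¹.toNNReal : ℝ≥0) : ℝ≥0∞) = ENNReal.ofReal r2⁻¹ := rfl
        rw [h1, h2, hr1, hr2, ← Real.exp_neg, ← Real.exp_neg,
          ← ENNReal.ofReal_mul (Real.exp_nonneg _), ← Real.exp_add,
          ← ENNReal.ofReal_mul (Real.exp_nonneg _), ← Real.exp_add]
        rw [show -(a * γ) + -(-b * γ) + -(b - a) * γ = 0 by ring, Real.exp_zero,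
          ENNReal.ofReal_one, one_smul]
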